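/- For d > 1, a finite automaton B (DFA or PFA) is (carefully) synchronizing if and only if the PFA A_d(B) is carefully synchronizing. -/

import Mathlib

/-- Alphabet of `A_d(B)`: letter `a`, letters `b_i`, and the letters `c_l` of `B`
(indexed by naturals). -/
inductive LB | a | b (i : ℕ) | c (l : ℕ)
deriving DecidableEq

/-- Partial transition function of `A_d(B)` built from an automaton `B` with
states `{1,…,k}` and (partial) transition `γ`; the state `q_j^i` of `A_d(B)` is
encoded as `(i, j)` with `1 ≤ i ≤ k`, `0 ≤ j ≤ d-1`. -/
def δAB (d k : ℕ) (γ : ℕ → ℕ → Option ℕ) : ℕ × ℕ → LB → Option (ℕ × ℕ) := fun p x =>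
  if ¬(1 ≤ p.1 ∧ p.1 ≤ k ∧ p.2 < d) then none else
  match x with
  | LB.a => some (p.1, 0)
  | LB.b l =>
      if ¬(1 ≤ l ∧ l ≤ k) then none
      else if p.1 = l then (if p.2 + 1 < d then some (p.1, p.2 + 1) else none)
      else if l < p.1 then some (p.1, p.2)
      else if p.2 = d - 1 then some (p.1, 0) else none
  | LB.c l =>
      if p.2 = d - 1 then (γ p.1 l).map (fun j => (j, 0)) else none

/-- Extension of a partial transition function to words. -/
def run {Q A : Type*} (δ : Q → A → Option Q) : Q → List A → Option Q
  | q, [] => some q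
  | q, x :: xs => (δ q x).bind (fun q' => run δ q' xs)

/-- One step of the power automaton. -/
def stepSet {Q A : Type*} [DecidableEq Q] (δ : Q → A → Option Q)
    (S : Finset Q) (x : A) : Option (Finset Q) :=
  if ∀ q ∈ S, (δ q x).isSome then some (S.biUnion fun q => (δ q x).toFinset)
  else none

/-- Run of the power automaton on a word. -/
def runSet {Q A : Type*} [DecidableEq Q] (δ : Q → A → Option Q)
    (S : Finset Q) (w : List A) : Option (Finset Q) :=
  List.foldlM (stepSet δ) S w

namespace AdBAux

theorem run_append {Q A : Type*} (δ : Q → A → Option Q) (u v : List A) (q : Q) :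
    run δ q (u ++ v) = (run δ q u).bind (fun q' => run δ q' v) := by
  induction u generalizing q with
  | nil => simp [run]
  | cons x xs ih =>
    simp only [List.cons_append, run]
    cases δ q x with
    | none => simp
    | some q' => simp [ih]

theorem run_join_replicate {Q A : Type*} (δ : Q → A → Option Q) (blk : List A)
    (f : ℕ → Q) (n : ℕ) (h : ∀ j, j < n → run δ (f j) blk = some (f (j + 1))) :
    ∀ m j, j + m ≤ n → run δ (f j) ((List.replicate m blk).flatten) = some (f (j + m)) := by
  intro m
  induction m with
  | zero => intro j _; simp [run]
  | succ m ih =>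
    intro j hj
    rw [List.replicate_succ, List.flatten_cons, run_append, h j (by omega)]
    have := ih (j + 1) (by omega)
    simpa [show j + 1 + m = j + (m + 1) by omega] using this

theorem run_join_replicate_fix {Q A : Type*} (δ : Q → A → Option Q) (blk : List A)
    (q : Q) (h : run δ q blk = some q) (m : ℕ) :
    run δ q ((List.replicate m blk).flatten) = some q := by
  have := run_join_replicate δ blk (fun _ => q) m (fun j _ => h) m 0 (by omega)
  simpa using this

section Steps

variable (d k : ℕ) (γ : ℕ → ℕ → Option ℕ)

theorem step_a (i j : ℕ) (h1 : 1 ≤ i) (h2 : i ≤ k) (h3 : j < d) :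
    δAB d k γ (i, j) LB.a = some (i, 0) := by
  simp [δAB, h1, h2, h3]

theorem step_b_lt (i j l : ℕ) (h1 : 1 ≤ i) (h2 : i ≤ k) (h3 : j < d)
    (h4 : 1 ≤ l) (h5 : l < i) :
    δAB d k γ (i, j) (LB.b l) = some (i, j) := by
  have h6 : l ≤ k := by omega
  have h7 : ¬ i = l := by omega
  simp [δAB, h1, h2, h3, h4, h5, h6, h7]

theorem step_b_eq (i j : ℕ) (h1 : 1 ≤ i) (h2 : i ≤ k) (h3 : j + 1 < d) :
    δAB d k γ (i, j) (LB.b i) = some (i, j + 1) := by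
  simp [δAB, h1, h2, h3, (by omega : j < d)]

theorem step_b_gt (i l : ℕ) (h1 : 1 ≤ i) (h2 : i < l) (h3 : l ≤ k) (h4 : 0 < d) :
    δAB d k γ (i, d - 1) (LB.b l) = some (i, 0) := by
  have h5 : i ≤ k := by omega
  have h6 : 1 ≤ l := by omega
  have h7 : d - 1 < d := by omega
  have h8 : ¬ i = l := by omega
  have h9 : ¬ l < i := by omega
  simp [δAB, h1, h2, h3, h5, h6, h7, h8, h9]

theorem step_c (i l : ℕ) (h1 : 1 ≤ i) (h2 : i ≤ k) (h4 : 0 < d) :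
    δAB d k γ (i, d - 1) (LB.c l) = (γ i l).map (fun j => (j, 0)) := by
  simp [δAB, h1, h2, (by omega : d - 1 < d)]

end Steps

/-- The staircase word raising chains `1..i` from level `0` to level `d-1`
(it counts in base `d`). -/
def U (d : ℕ) : ℕ → List LB
  | 0 => []
  | i + 1 => U d i ++ (List.replicate (d - 1) (LB.b (i + 1) :: U d i)).flatten

theorem U_run (d k : ℕ) (γ : ℕ → ℕ → Option ℕ) (hd : 1 < d) :
    ∀ i, i ≤ k → ∀ i' j', 1 ≤ i' → i' ≤ k → j' < d →
      (i < i' → run (δAB d k γ) (i', j') (U d i) = some (i', j')) ∧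
      (i' ≤ i → j' = 0 → run (δAB d k γ) (i', j') (U d i) = some (i', d - 1)) := by
  intro i
  induction i with
  | zero =>
    intro _ i' j' h1 _ _
    exact ⟨fun _ => rfl, fun h => by omega⟩
  | succ i ih =>
    intro hik i' j' h1 h2 h3
    have hik' : i ≤ k := by omega
    constructor
    · -- i + 1 < i' : self-loop
      intro hlt
      rw [U, run_append, (ih hik' i' j' h1 h2 h3).1 (by omega), Option.bind_some]
      apply run_join_replicate_fix
      rw [run, step_b_lt d k γ i' j' (i + 1) h1 h2 h3 (by omega) hlt, Option.bind_some]
      exact (ih hik' i' j' h1 h2 h3).1 (by omega)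
    · -- i' ≤ i + 1, j' = 0 : raise to d - 1
      intro hle hj0
      subst hj0
      rcases Nat.lt_or_ge i' (i + 1) with hcase | hcase
      · -- i' ≤ i
        rw [U, run_append, (ih hik' i' 0 h1 h2 (by omega)).2 (by omega) rfl,
          Option.bind_some]
        apply run_join_replicate_fix
        rw [run, step_b_gt d k γ i' (i + 1) h1 (by omega) hik (by omega), Option.bind_some]
        exact (ih hik' i' 0 h1 h2 (by omega)).2 (by omega) rfl
      · -- i' = i + 1 : count up
        have hi' : i' = i + 1 := by omega
        subst hi'
        rw [U, run_append, (ih hik' (i + 1) 0 h1 h2 (by omega)).1 (by omega),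
          Option.bind_some]
        have key : ∀ j, j < d - 1 →
            run (δAB d k γ) ((fun j => ((i + 1 : ℕ), j)) j) (LB.b (i + 1) :: U d i)
              = some ((fun j => ((i + 1 : ℕ), j)) (j + 1)) := by
          intro j hj
          rw [run, step_b_eq d k γ (i + 1) j h1 h2 (by omega), Option.bind_some]
          exact (ih hik' (i + 1) (j + 1) h1 h2 (by omega)).1 (by omega)
        have := run_join_replicate (δAB d k γ) _ _ (d - 1) key (d - 1) 0 (by omega)
        simpa using this

/-- The word of `A_d(B)` simulating a word of `B`. -/
def body (d k : ℕ) : List ℕ → List LB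
  | [] => []
  | l :: ls => U d k ++ LB.c l :: body d k ls

theorem body_run (d k : ℕ) (γ : ℕ → ℕ → Option ℕ) (hd : 1 < d)
    (hγ : ∀ i l j, γ i l = some j → 1 ≤ j ∧ j ≤ k) :
    ∀ (w : List ℕ) (q qb : ℕ), 1 ≤ q → q ≤ k → run γ q w = some qb →
      run (δAB d k γ) (q, 0) (body d k w) = some (qb, 0) := by
  intro w
  induction w with
  | nil =>
    intro q qb _ _ h
    simp only [run, Option.some_inj] at h
    subst h
    rfl
  | cons l ls ih =>
    intro q qb h1 h2 h
    simp only [run] at h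
    rcases Option.bind_eq_some_iff.mp h with ⟨q', hq', hrest⟩
    have hq'range := hγ q l q' hq'
    rw [body, run_append,
      (U_run d k γ hd k le_rfl q 0 h1 h2 (by omega)).2 h2 rfl, Option.bind_some,
      run, step_c d k γ q l h1 h2 (by omega), hq', Option.map_some, Option.bind_some]
    exact ih q' qb hq'range.1 hq'range.2 hrest

/-- Subsequence of `c`-letters. -/
def csub : List LB → List ℕ :=
  List.filterMap (fun x => match x with | LB.c l => some l | _ => none)

theorem proj_run (d k : ℕ) (γ : ℕ → ℕ → Option ℕ) :
    ∀ (w : List LB) (p q : ℕ × ℕ), run (δAB d k γ) p w = some q →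
      run γ p.1 (csub w) = some q.1 := by
  intro w
  induction w with
  | nil =>
    intro p q h
    simp only [run, Option.some_inj] at h
    simp [csub, run, h]
  | cons x xs ih =>
    intro p q h
    simp only [run] at h
    rcases Option.bind_eq_some_iff.mp h with ⟨p', hp', hrest⟩
    cases x with
    | a =>
      have hfst : p'.1 = p.1 := by
        simp only [δAB] at hp'
        split at hp'
        · exact absurd hp' (by simp)
        · simp only [Option.some_inj] at hp'; rw [← hp']
      have := ih p' q hrest
      simpa [csub, hfst] using this
    | b l =>
      have hfst : p'.1 = p.1 := by
        simp only [δAB] at hp'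
        split at hp'
        · exact absurd hp' (by simp)
        · split_ifs at hp' <;> simp only [Option.some_inj] at hp' <;> rw [← hp']
      have := ih p' q hrest
      simpa [csub, hfst] using this
    | c l =>
      have : ∃ j, γ p.1 l = some j ∧ p'.1 = j := by
        simp only [δAB] at hp'
        split at hp'
        · exact absurd hp' (by simp)
        · split_ifs at hp'
          rcases Option.map_eq_some_iff.mp hp' with ⟨j, hj, hj'⟩
          exact ⟨j, hj, by rw [← hj']⟩
      rcases this with ⟨j, hj, hj'⟩
      have := ih p' q hrest
      simp only [csub, List.filterMap_cons] at this ⊢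
      simp only [run, hj, Option.bind_some]
      rw [← hj']
      exact this

end AdBAux

/-- Theorem 2: for `d > 1`, the automaton `B` (a DFA or PFA on states `{1,…,k}`
with transition `γ`) is (carefully) synchronizing if and only if `A_d(B)` is
carefully synchronizing. -/
theorem AdB_careful_sync_iff (d k : ℕ) (hd : 1 < d) (hk : 1 ≤ k)
    (γ : ℕ → ℕ → Option ℕ) (hγ : ∀ i l j, γ i l = some j → 1 ≤ j ∧ j ≤ k) :
    (∃ w : List ℕ, ∃ qbar : ℕ, ∀ q ∈ Finset.Icc 1 k, run γ q w = some qbar) ↔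
    (∃ w : List LB, ∃ qbar : ℕ × ℕ,
        ∀ q ∈ Finset.Icc 1 k ×ˢ Finset.range d, run (δAB d k γ) q w = some qbar) := by
  constructor
  · rintro ⟨w, qbar, hw⟩
    refine ⟨LB.a :: AdBAux.body d k w, (qbar, 0), ?_⟩
    rintro ⟨i, j⟩ hq
    simp only [Finset.mem_product, Finset.mem_Icc, Finset.mem_range] at hq
    obtain ⟨⟨h1, h2⟩, h3⟩ := hq
    rw [run, AdBAux.step_a d k γ i j h1 h2 h3, Option.bind_some]
    exact AdBAux.body_run d k γ hd hγ w i qbar h1 h2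
      (hw i (Finset.mem_Icc.mpr ⟨h1, h2⟩))
  · rintro ⟨w, qbar, hw⟩
    refine ⟨AdBAux.csub w, qbar.1, ?_⟩
    intro q hq
    rw [Finset.mem_Icc] at hq
    have hmem : ((q, 0) : ℕ × ℕ) ∈ Finset.Icc 1 k ×ˢ Finset.range d := by
      simp [Finset.mem_product, Finset.mem_Icc, hq.1, hq.2]
      omega
    exact AdBAux.proj_run d k γ w (q, 0) qbar (hw (q, 0) hmem)
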